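/- Let s0 ≤ b with b ∈ I, and let y, z : I → ℂ belong to L²_β(s0,b), be continuous and differentiable at s0, with D_β y and D_β z differentiable at s0 and D_β y, D_β z, D_{β^{-1}}D_β y, D_{β^{-1}}D_β z bounded on the set {β^k(b) : k ∈ ℕ₀} ∪ {s0}. Then ⟨−(D_β β^{-1})·(D_{β^{-1}}(D_β y)), z⟩ = [y, conj z](b) − [y, conj z](s0) + ⟨y, −(D_β β^{-1})·(D_{β^{-1}}(D_β z))⟩, where the inner products are taken over (s0,b). -/

import Mathlib

open Function Set ComplexConjugate

/-- The β-derivative `D_β f` of `f : ℝ → ℂ`: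
`(f (β t) - f t) / (β t - t)` for `t ≠ s0`, and `f' s0` at `t = s0`. -/
noncomputable def Dq (β : ℝ → ℝ) (s0 : ℝ) (f : ℝ → ℂ) (t : ℝ) : ℂ :=
  if t = s0 then deriv f s0 else (f (β t) - f t) / ((β t : ℂ) - (t : ℂ))

/-- The β-integral `∫_{s0}^{x} f d_β = ∑_{k} (β^k x - β^{k+1} x) f (β^k x)` (complex-valued). -/
noncomputable def betaInt (β : ℝ → ℝ) (x : ℝ) (f : ℝ → ℂ) : ℂ :=
  ∑' k : ℕ, ((β^[k] x - β^[k + 1] x : ℝ) : ℂ) * f (β^[k] x)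

/-- The β-integral `∫_{s0}^{x} f d_β` for a real-valued integrand. -/
noncomputable def betaIntR (β : ℝ → ℝ) (x : ℝ) (f : ℝ → ℝ) : ℝ :=
  ∑' k : ℕ, (β^[k] x - β^[k + 1] x) * f (β^[k] x)

/-- `∫_a^b f d_β := ∫_{s0}^b f d_β - ∫_{s0}^a f d_β`. -/
noncomputable def betaIntAB (β : ℝ → ℝ) (a b : ℝ) (f : ℝ → ℂ) : ℂ :=
  betaInt β b f - betaInt β a f

/-- `∫_a^b f d_β` for a real-valued integrand. -/
noncomputable def betaIntRAB (β : ℝ → ℝ) (a b : ℝ) (f : ℝ → ℝ) : ℝ :=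
  betaIntR β b f - betaIntR β a f

/-- `D_β β⁻¹`, viewed as a complex-valued function. -/
noncomputable def DbinvC (β βinv : ℝ → ℝ) (s0 : ℝ) : ℝ → ℂ :=
  Dq β s0 fun u => (βinv u : ℂ)

/-- The β-Sturm–Liouville operator
`ℓ_β y (t) = -(D_β β⁻¹)(t) · (D_{β⁻¹} (D_β y))(t) + r t · y t`. -/
noncomputable def ellBeta (β βinv : ℝ → ℝ) (s0 : ℝ) (r : ℝ → ℝ) (y : ℝ → ℂ) (t : ℝ) : ℂ :=
  -(DbinvC β βinv s0 t) * Dq βinv s0 (Dq β s0 y) t + (r t : ℂ) * y t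

/-- The β-Wronskian `[y,z](t) = y t · (D_{β⁻¹} z) t - z t · (D_{β⁻¹} y) t`. -/
noncomputable def wronk (βinv : ℝ → ℝ) (s0 : ℝ) (y z : ℝ → ℂ) (t : ℝ) : ℂ :=
  y t * Dq βinv s0 z t - z t * Dq βinv s0 y t

/-- The β-exponential `e_{p,β}(t) = 1 / ∏_k (1 - p(β^k t)(β^k t - β^{k+1} t))`. -/
noncomputable def ebeta (β : ℝ → ℝ) (p : ℝ → ℂ) (t : ℝ) : ℂ :=
  1 / ∏' k : ℕ, (1 - p (β^[k] t) * ((β^[k] t - β^[k + 1] t : ℝ) : ℂ))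

/-- The β-exponential `E_{p,β}(t) = ∏_k (1 + p(β^k t)(β^k t - β^{k+1} t))`. -/
noncomputable def Ebeta (β : ℝ → ℝ) (p : ℝ → ℂ) (t : ℝ) : ℂ :=
  ∏' k : ℕ, (1 + p (β^[k] t) * ((β^[k] t - β^[k + 1] t : ℝ) : ℂ))

/-- `sin_{p,β}(t) = (e_{ip,β}(t) - e_{-ip,β}(t)) / (2i)`. -/
noncomputable def sinBeta (β : ℝ → ℝ) (p : ℝ → ℂ) (t : ℝ) : ℂ :=
  (ebeta β (fun s => Complex.I * p s) t - ebeta β (fun s => -(Complex.I * p s)) t) /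
    (2 * Complex.I)

/-- `cos_{p,β}(t) = (e_{ip,β}(t) + e_{-ip,β}(t)) / 2`. -/
noncomputable def cosBeta (β : ℝ → ℝ) (p : ℝ → ℂ) (t : ℝ) : ℂ :=
  (ebeta β (fun s => Complex.I * p s) t + ebeta β (fun s => -(Complex.I * p s)) t) / 2

theorem stmt_5
    (I : Set ℝ) (hIconn : I.OrdConnected)
    (β βinv : ℝ → ℝ) (s0 : ℝ)
    (hmono : StrictMonoOn β I) (hcont : ContinuousOn β I)
    (hbij : Set.BijOn β I I) (hinv : Set.InvOn βinv β I I)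
    (hs0I : s0 ∈ I) (hfix : β s0 = s0)
    (hsign : ∀ t ∈ I, (t - s0) * (β t - t) ≤ 0)
    (huniq : ∀ t ∈ I, (t - s0) * (β t - t) = 0 → t = s0)
    (b : ℝ) (hb : b ∈ I) (hs0b : s0 ≤ b) (y z : ℝ → ℂ)
    (hyL2 : Summable fun j : ℕ => (β^[j] b - β^[j + 1] b) * ‖y (β^[j] b)‖ ^ 2)
    (hzL2 : Summable fun j : ℕ => (β^[j] b - β^[j + 1] b) * ‖z (β^[j] b)‖ ^ 2)
    (hyc : ContinuousAt y s0) (hzc : ContinuousAt z s0)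
    (hyd : DifferentiableAt ℝ y s0) (hzd : DifferentiableAt ℝ z s0)
    (hDyd : DifferentiableAt ℝ (Dq β s0 y) s0) (hDzd : DifferentiableAt ℝ (Dq β s0 z) s0)
    (hDyb : ∃ C, ∀ t ∈ insert s0 (Set.range fun j : ℕ => β^[j] b), ‖Dq β s0 y t‖ ≤ C)
    (hDzb : ∃ C, ∀ t ∈ insert s0 (Set.range fun j : ℕ => β^[j] b), ‖Dq β s0 z t‖ ≤ C)
    (hDDyb : ∃ C, ∀ t ∈ insert s0 (Set.range fun j : ℕ => β^[j] b), ‖Dq βinv s0 (Dq β s0 y) t‖ ≤ C)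
    (hDDzb : ∃ C, ∀ t ∈ insert s0 (Set.range fun j : ℕ => β^[j] b), ‖Dq βinv s0 (Dq β s0 z) t‖ ≤ C) :
    betaInt β b (fun t => -(DbinvC β βinv s0 t) * Dq βinv s0 (Dq β s0 y) t * conj (z t)) =
      wronk βinv s0 y (fun t => conj (z t)) b - wronk βinv s0 y (fun t => conj (z t)) s0 +
        betaInt β b (fun t => y t * conj (-(DbinvC β βinv s0 t) * Dq βinv s0 (Dq β s0 z) t)) := by
  
  rcases eq_or_lt_of_le hs0b with heq | hlt
  · rw [← heq]
    simp [betaInt, Function.iterate_fixed hfix]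
  -- main case : s0 < b
  obtain ⟨a0, ha0I, ha0⟩ := hbij.surjOn hb
  set c : ℕ → ℝ := fun k => β^[k] a0 with hc_def
  have hβc : ∀ k, β (c k) = c (k + 1) := by
    intro k; simp only [hc_def]; rw [Function.iterate_succ_apply']
  have hcb : ∀ k : ℕ, β^[k] b = c (k + 1) := by
    intro k
    simp only [hc_def]
    rw [Function.iterate_succ_apply, ha0]
  have hmem : ∀ k, c k ∈ I := by
    intro k; induction k with
    | zero => exact ha0I
    | succ n ih => rw [← hβc]; exact hbij.mapsTo ih
  have hgt : ∀ k, s0 < c k := by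
    intro k; induction k with
    | zero =>
      rcases lt_trichotomy s0 a0 with h | h | h
      · exact h
      · exfalso; rw [← h, hfix] at ha0; exact absurd ha0.symm (ne_of_gt hlt)
      · exfalso
        have := hmono ha0I hs0I h
        rw [ha0, hfix] at this
        linarith
    | succ n ih =>
      have := hmono hs0I (hmem n) ih
      rw [hfix, hβc] at this
      exact this
  have hdec : ∀ k, c (k + 1) < c k := by
    intro k
    by_contra hcon
    push_neg at hcon
    have hks := hgt k
    have h2 : (c k - s0) * (β (c k) - c k) ≠ 0 := by
      intro h
      exact absurd (huniq (c k) (hmem k) h) (ne_of_gt (hgt k))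
    have h1 : (0:ℝ) ≤ (c k - s0) * (β (c k) - c k) :=
      mul_nonneg (by linarith) (by rw [hβc]; linarith)
    exact h2 (le_antisymm (hsign (c k) (hmem k)) h1)
  -- convergence of the orbit to s0
  have hanti : Antitone c := antitone_nat_of_succ_le fun n => (hdec n).le
  have hbdd : BddBelow (Set.range c) := ⟨s0, by rintro x ⟨k, rfl⟩; exact (hgt k).le⟩
  have hLtend : Filter.Tendsto c Filter.atTop (nhds (⨅ k, c k)) := tendsto_atTop_ciInf hanti hbdd
  have hs0L : s0 ≤ ⨅ k, c k := le_ciInf fun k => (hgt k).le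
  have hLc0 : (⨅ k, c k) ≤ c 0 := ciInf_le hbdd 0
  have hLI : (⨅ k, c k) ∈ I := hIconn.out hs0I ha0I ⟨hs0L, hLc0⟩
  have hβL : β (⨅ k, c k) = ⨅ k, c k := by
    have h1 : Filter.Tendsto (fun k => β (c k)) Filter.atTop (nhds (β (⨅ k, c k))) := by
      apply (hcont _ hLI).tendsto.comp
      rw [tendsto_nhdsWithin_iff]
      exact ⟨hLtend, Filter.Eventually.of_forall fun k => hmem k⟩
    have h2 : Filter.Tendsto (fun k => β (c k)) Filter.atTop (nhds (⨅ k, c k)) := by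
      simp only [hβc]
      exact hLtend.comp (Filter.tendsto_add_atTop_nat 1)
    exact tendsto_nhds_unique h1 h2
  have hclim : Filter.Tendsto c Filter.atTop (nhds s0) := by
    have : (⨅ k, c k) = s0 := huniq _ hLI (by rw [hβL]; ring)
    rwa [this] at hLtend
  have hβinvc : ∀ k, βinv (c (k + 1)) = c k := fun k => by rw [← hβc]; exact hinv.1 (hmem k)
  have hne : ∀ k, c k ≠ s0 := fun k => ne_of_gt (hgt k)
  have hcne : ∀ k, ((c k : ℂ)) - c (k + 1) ≠ 0 := by
    intro k
    rw [sub_ne_zero]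
    exact_mod_cast (hdec k).ne'
  have hcne2 : ∀ k, ((c (k + 1) : ℂ)) - c k ≠ 0 := by
    intro k
    rw [sub_ne_zero]
    exact_mod_cast (hdec k).ne
  -- unfolding lemmas for Dq at orbit points
  have e1 : ∀ (f : ℝ → ℂ) k, Dq β s0 f (c k)
      = (f (c (k + 1)) - f (c k)) / ((c (k + 1) : ℂ) - c k) := by
    intro f k
    unfold Dq
    rw [if_neg (hne k), hβc k]
  have e2 : ∀ (f : ℝ → ℂ) k, Dq βinv s0 f (c (k + 1))
      = (f (c k) - f (c (k + 1))) / ((c k : ℂ) - c (k + 1)) := by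
    intro f k
    unfold Dq
    rw [if_neg (hne (k + 1)), hβinvc k]
  have e3 : ∀ k, DbinvC β βinv s0 (c (k + 1))
      = ((c (k + 1) : ℂ) - c k) / ((c (k + 2) : ℂ) - c (k + 1)) := by
    intro k
    unfold DbinvC
    simp only [e1, hβinvc]
  -- the summands
  set A : ℕ → ℂ := fun k => ((β^[k] b - β^[k + 1] b : ℝ) : ℂ) *
    (-(DbinvC β βinv s0 (β^[k] b)) * Dq βinv s0 (Dq β s0 y) (β^[k] b) * conj (z (β^[k] b)))
    with hA_def
  set B : ℕ → ℂ := fun k => ((β^[k] b - β^[k + 1] b : ℝ) : ℂ) *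
    (y (β^[k] b) * conj (-(DbinvC β βinv s0 (β^[k] b)) * Dq βinv s0 (Dq β s0 z) (β^[k] b)))
    with hB_def
  have hA' : ∀ k, A k = -(((c k - c (k + 1) : ℝ)) : ℂ) *
      Dq βinv s0 (Dq β s0 y) (c (k + 1)) * conj (z (c (k + 1))) := by
    intro k
    simp only [hA_def, hcb, e3]
    push_cast
    field_simp [hcne (k + 1), hcne2 (k + 1)]
    ring
  have hB' : ∀ k, B k = -(((c k - c (k + 1) : ℝ)) : ℂ) *
      y (c (k + 1)) * conj (Dq βinv s0 (Dq β s0 z) (c (k + 1))) := by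
    intro k
    simp only [hB_def, hcb, e3, map_mul, map_neg, map_div₀, map_sub, Complex.conj_ofReal]
    push_cast
    field_simp [hcne (k + 1), hcne2 (k + 1)]
    ring
  -- summability
  obtain ⟨Cy, hCy⟩ := hDDyb
  obtain ⟨Cz, hCz⟩ := hDDzb
  have hc1tend : Filter.Tendsto (fun k => c (k + 1)) Filter.atTop (nhds s0) :=
    hclim.comp (Filter.tendsto_add_atTop_nat 1)
  obtain ⟨Mz, hMz⟩ := (((hzc.tendsto.comp hc1tend).norm).bddAbove_range : BddAbove _)
  obtain ⟨My, hMy⟩ := (((hyc.tendsto.comp hc1tend).norm).bddAbove_range : BddAbove _)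
  have hMz' : ∀ k, ‖z (c (k + 1))‖ ≤ Mz := fun k => hMz ⟨k, rfl⟩
  have hMy' : ∀ k, ‖y (c (k + 1))‖ ≤ My := fun k => hMy ⟨k, rfl⟩
  have hmemrange : ∀ k : ℕ, c (k + 1) ∈ insert s0 (Set.range fun j : ℕ => β^[j] b) :=
    fun k => Or.inr ⟨k, hcb k⟩
  have hd0 : ∀ k, 0 ≤ c k - c (k + 1) := fun k => by linarith [hdec k]
  have hdsum : Summable (fun k => c k - c (k + 1)) := by
    apply summable_of_sum_range_le hd0 (c := c 0 - s0)
    intro n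
    rw [Finset.sum_range_sub' c n]
    linarith [hgt n]
  have hCy0 : (0:ℝ) ≤ Cy := le_trans (norm_nonneg _) (hCy s0 (Or.inl rfl))
  have hCz0 : (0:ℝ) ≤ Cz := le_trans (norm_nonneg _) (hCz s0 (Or.inl rfl))
  have hnormA : ∀ k, ‖A k‖ ≤ (c k - c (k + 1)) * (Cy * Mz) := by
    intro k
    rw [hA' k, norm_mul, norm_mul, norm_neg, Complex.norm_real, Real.norm_eq_abs,
      abs_of_nonneg (hd0 k), mul_assoc]
    refine mul_le_mul_of_nonneg_left ?_ (hd0 k)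
    have h1 : ‖Dq βinv s0 (Dq β s0 y) (c (k + 1))‖ ≤ Cy := hCy _ (hmemrange k)
    have h2 : ‖conj (z (c (k + 1)))‖ ≤ Mz := by rw [RCLike.norm_conj]; exact hMz' k
    exact mul_le_mul h1 h2 (norm_nonneg _) hCy0
  have hnormB : ∀ k, ‖B k‖ ≤ (c k - c (k + 1)) * (My * Cz) := by
    intro k
    rw [hB' k, norm_mul, norm_mul, norm_neg, Complex.norm_real, Real.norm_eq_abs,
      abs_of_nonneg (hd0 k), mul_assoc]
    refine mul_le_mul_of_nonneg_left ?_ (hd0 k)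
    have h1 : ‖conj (Dq βinv s0 (Dq β s0 z) (c (k + 1)))‖ ≤ Cz := by
      rw [RCLike.norm_conj]; exact hCz _ (hmemrange k)
    exact mul_le_mul (hMy' k) h1 (norm_nonneg _) (le_trans (norm_nonneg _) (hMy' k))
  have hAsum : Summable A := Summable.of_norm_bounded (hdsum.mul_right (Cy * Mz)) hnormA
  have hBsum : Summable B := Summable.of_norm_bounded (hdsum.mul_right (My * Cz)) hnormB
  -- telescoping identity
  set W : ℕ → ℂ := fun k => wronk βinv s0 y (fun t => conj (z t)) (c (k + 1)) with hW_def
  have htel : ∀ k, A k - B k = W k - W (k + 1) := by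
    intro k
    rw [hA' k, hB' k]
    simp only [hW_def, wronk, e2, e1, map_sub, map_div₀, map_mul, map_neg,
      Complex.conj_ofReal]
    push_cast
    field_simp [hcne k, hcne (k + 1), hcne2 k, hcne2 (k + 1)]
    ring
  -- limit of the Wronskian along the orbit
  have hflip : ∀ (f : ℝ → ℂ) k, Dq βinv s0 f (c (k + 1)) = Dq β s0 f (c k) := by
    intro f k
    rw [e2 f k, e1 f k, div_eq_div_iff (hcne k) (hcne2 k)]
    ring
  have hconjDq : ∀ k, Dq β s0 (fun t => conj (z t)) (c k) = conj (Dq β s0 z (c k)) := by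
    intro k
    rw [e1 _ k, e1 z k]
    simp [map_div₀, map_sub, Complex.conj_ofReal]
  have hW' : ∀ k, W k = y (c (k + 1)) * conj (Dq β s0 z (c k)) -
      conj (z (c (k + 1))) * Dq β s0 y (c k) := by
    intro k
    simp only [hW_def, wronk, hflip, hconjDq]
  have hdconj : deriv (fun t => conj (z t)) s0 = conj (deriv z s0) :=
    (Complex.conjCLE.hasFDerivAt.comp_hasDerivAt s0 hzd.hasDerivAt : HasDerivAt _ _ _).deriv
  have hgoalval : wronk βinv s0 y (fun t => conj (z t)) s0
      = y s0 * conj (Dq β s0 z s0) - conj (z s0) * Dq β s0 y s0 := by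
    simp only [wronk, Dq, eq_self_iff_true, if_true]
    rw [hdconj]
  have hWlim : Filter.Tendsto W Filter.atTop
      (nhds (wronk βinv s0 y (fun t => conj (z t)) s0)) := by
    have t1 : Filter.Tendsto (fun k => y (c (k + 1))) Filter.atTop (nhds (y s0)) :=
      hyc.tendsto.comp hc1tend
    have t2 : Filter.Tendsto (fun k => conj (Dq β s0 z (c k))) Filter.atTop
        (nhds (conj (Dq β s0 z s0))) :=
      (Complex.continuous_conj.tendsto _).comp (hDzd.continuousAt.tendsto.comp hclim)
    have t3 : Filter.Tendsto (fun k => conj (z (c (k + 1)))) Filter.atTop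
        (nhds (conj (z s0))) :=
      (Complex.continuous_conj.tendsto _).comp (hzc.tendsto.comp hc1tend)
    have t4 : Filter.Tendsto (fun k => Dq β s0 y (c k)) Filter.atTop
        (nhds (Dq β s0 y s0)) := hDyd.continuousAt.tendsto.comp hclim
    rw [hgoalval]
    exact Filter.Tendsto.congr (fun k => (hW' k).symm) ((t1.mul t2).sub (t3.mul t4))
  -- assembly
  have hABsum : Summable fun k => A k - B k := hAsum.sub hBsum
  have htend1 : Filter.Tendsto (fun n => ∑ i ∈ Finset.range n, (A i - B i)) Filter.atTop
      (nhds (∑' k, (A k - B k))) := hABsum.hasSum.tendsto_sum_nat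
  have hpartial : ∀ n, ∑ i ∈ Finset.range n, (A i - B i) = W 0 - W n := by
    intro n
    rw [← Finset.sum_range_sub' W n]
    exact Finset.sum_congr rfl fun i _ => htel i
  have htend2 : Filter.Tendsto (fun n => ∑ i ∈ Finset.range n, (A i - B i)) Filter.atTop
      (nhds (W 0 - wronk βinv s0 y (fun t => conj (z t)) s0)) := by
    simp only [hpartial]
    exact tendsto_const_nhds.sub hWlim
  have hkey : ∑' k, (A k - B k) = W 0 - wronk βinv s0 y (fun t => conj (z t)) s0 :=
    tendsto_nhds_unique htend1 htend2
  have hsub : ∑' k, (A k - B k) = (∑' k, A k) - ∑' k, B k := Summable.tsum_sub hAsum hBsum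
  have hc1b : c 1 = b := (hcb 0).symm.trans (Function.iterate_zero_apply β b)
  have hW0 : W 0 = wronk βinv s0 y (fun t => conj (z t)) b := by
    rw [hW_def]
    simp only [hc1b]
  have hbA : betaInt β b (fun t => -(DbinvC β βinv s0 t) * Dq βinv s0 (Dq β s0 y) t *
      conj (z t)) = ∑' k, A k := rfl
  have hbB : betaInt β b (fun t => y t * conj (-(DbinvC β βinv s0 t) *
      Dq βinv s0 (Dq β s0 z) t)) = ∑' k, B k := rfl
  rw [hbA, hbB, ← hW0]
  linear_combination hkey - hsub
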